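/- (Corollary 5.5: number of vertical equivalence classes at a given level.) Let n ≥ 3 and 0 ≤ i ≤ n−3. Let J_i be the subgroup of Equiv.Perm (Fin n) generated by {s_i, s_{i+1}} ∪ {s_m : m ≤ i−2 or m ≥ i+3}. The predicate 'σ⁻¹(n−1) ∈ {i, i+1, i+2}' is invariant under right multiplication of σ by elements of J_i, hence descends to the set of left cosets σJ_i. The number of left cosets of J_i in Equiv.Perm (Fin n) whose representatives σ satisfy σ⁻¹(n−1) ∈ {i, i+1, i+2} equals (n−1)!/(2·i!·(n−i−3)!) = C(n−1, i+2)·C(i+2, 2). (These cosets are precisely the G-homotopy equivalence classes of vertical primitive 6-cycles with transpositions s_i, s_{i+1}.) -/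

import Mathlib

/-- The adjacent transposition `s_j = (j, j+1)` in the symmetric group on `Fin n`,
indexed by `j : Fin (n-1)`. -/
def s {n : ℕ} (j : Fin (n - 1)) : Equiv.Perm (Fin n) :=
  Equiv.swap ⟨j.val, by have := j.isLt; omega⟩ ⟨j.val + 1, by have := j.isLt; omega⟩

/-- region of a point: 0 = below `i`, 1 = the block `{i,i+1,i+2}`, 2 = above. -/
def rg (n i : ℕ) (x : Fin n) : ℕ :=
  if x.val < i then 0 else if x.val < i + 3 then 1 else 2

lemma rg_swap {n i : ℕ} (u v : Fin n) (h : rg n i u = rg n i v) (x : Fin n) :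
    rg n i (Equiv.swap u v x) = rg n i x := by
  rcases eq_or_ne x u with rfl | hu
  · rw [Equiv.swap_apply_left]; exact h.symm
  rcases eq_or_ne x v with rfl | hv
  · rw [Equiv.swap_apply_right]; exact h
  · rw [Equiv.swap_apply_of_ne_of_ne hu hv]

/-- the subgroup of permutations preserving each region -/
def K (n i : ℕ) : Subgroup (Equiv.Perm (Fin n)) where
  carrier := {g | ∀ x, rg n i (g x) = rg n i x}
  one_mem' := fun _ => rfl
  mul_mem' := by
    intro a b ha hb x
    have : (a * b) x = a (b x) := rfl
    rw [this, ha, hb]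
  inv_mem' := by
    intro a ha x
    have := ha (a⁻¹ x)
    rw [show a (a⁻¹ x) = x from Equiv.apply_symm_apply a x] at this
    exact this.symm

lemma swap_mem_closure {n : ℕ} (S : Set (Equiv.Perm (Fin n))) (a b : ℕ)
    (hS : ∀ j : ℕ, a ≤ j → j + 2 ≤ b → ∀ h2 : j + 1 < n,
      Equiv.swap ⟨j, by omega⟩ ⟨j + 1, h2⟩ ∈ S) :
    ∀ d : ℕ, ∀ u v : Fin n, a ≤ u.val → v.val = u.val + 1 + d → v.val < b →
      Equiv.swap u v ∈ Subgroup.closure S := by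
  intro d
  induction d with
  | zero =>
    intro u v hu hv hvb
    have h2 : u.val + 1 < n := by omega
    have hveq : v = ⟨u.val + 1, h2⟩ := Fin.ext (by simp only [Fin.val_mk]; omega)
    have := hS u.val hu (by omega) h2
    rw [hveq]
    exact Subgroup.subset_closure this
  | succ d ih =>
    intro u v hu hv hvb
    have hwn : u.val + 1 < n := by omega
    set w : Fin n := ⟨u.val + 1, hwn⟩ with hw
    have huw : u ≠ w := fun h => by simp [hw, Fin.ext_iff] at h
    have huv : u ≠ v := fun h => by rw [h] at hv; omega
    have key : Equiv.swap w v * Equiv.swap u w * Equiv.swap w v = Equiv.swap u v := by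
      rw [Equiv.swap_mul_swap_mul_swap huw huv, Equiv.swap_comm]
    have h1 : Equiv.swap u w ∈ Subgroup.closure S := by
      have := hS u.val hu (by omega) hwn
      exact Subgroup.subset_closure this
    have h2 : Equiv.swap w v ∈ Subgroup.closure S := ih w v (by simp [hw]; omega)
      (by simp [hw]; omega) hvb
    rw [← key]
    exact mul_mem (mul_mem h2 h1) h2

lemma fix_mem_closure {n : ℕ} (S : Set (Equiv.Perm (Fin n))) (a : ℕ) :
    ∀ b : ℕ, b ≤ n →
      (∀ j : ℕ, a ≤ j → j + 2 ≤ b → ∀ h2 : j + 1 < n,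
        Equiv.swap ⟨j, by omega⟩ ⟨j + 1, h2⟩ ∈ S) →
      ∀ g : Equiv.Perm (Fin n), (∀ x : Fin n, (x.val < a ∨ b ≤ x.val) → g x = x) →
      g ∈ Subgroup.closure S := by
  intro b
  induction b with
  | zero =>
    intro _ _ g hg
    have : g = 1 := Equiv.ext fun x => hg x (Or.inr (Nat.zero_le _))
    rw [this]; exact one_mem _
  | succ b ih =>
    intro hb hS g hg
    by_cases hab : b < a
    · have : g = 1 := Equiv.ext fun x => hg x (by omega)
      rw [this]; exact one_mem _
    · push_neg at hab
      have hbn : b < n := hb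
      set p : Fin n := ⟨b, hbn⟩ with hp
      have hgk : g (g⁻¹ p) = p := Equiv.apply_symm_apply g p
      set k : Fin n := g⁻¹ p with hk
      by_cases hkp : k = p
      · have hgp : g p = p := hkp ▸ hgk
        refine ih (by omega) (fun j hj hjb h2 => hS j hj (by omega) h2) g ?_
        intro x hx
        rcases eq_or_ne x.val b with hxb | hxb
        · have hx' : x = p := Fin.ext hxb
          rw [hx']; exact hgp
        · exact hg x (by omega)
      · have hka : a ≤ k.val := by
          by_contra h
          have := hg k (Or.inl (by omega))
          rw [hgk] at this
          exact hkp this.symm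
        have hkb : k.val < b := by
          have h1 : k.val ≠ b := fun h => hkp (Fin.ext h)
          by_contra h
          push_neg at h
          have := hg k (Or.inr (by omega))
          rw [hgk] at this
          exact hkp this.symm
        have hsw : Equiv.swap k p ∈ Subgroup.closure S :=
          swap_mem_closure S a (b + 1) hS (b - (k.val + 1)) k p hka (by simp [hp]; omega)
            (by simp [hp])
        have hg' : ∀ x : Fin n, (x.val < a ∨ b ≤ x.val) → (g * Equiv.swap k p) x = x := by
          intro x hx
          have hmul : (g * Equiv.swap k p) x = g (Equiv.swap k p x) := rfl
          rcases eq_or_ne x p with rfl | hxp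
          · rw [hmul, Equiv.swap_apply_right, hgk]
          · have hxk : x ≠ k := by
              intro h
              rw [h] at hx
              omega
            rw [hmul, Equiv.swap_apply_of_ne_of_ne hxk hxp]
            have hxb : x.val ≠ b := fun h => hxp (Fin.ext h)
            exact hg x (by omega)
        have hmem := ih (by omega) (fun j hj hjb h2 => hS j hj (by omega) h2)
          (g * Equiv.swap k p) hg'
        have : g = g * Equiv.swap k p * Equiv.swap k p := by
          rw [mul_assoc, Equiv.swap_mul_self, mul_one]
        rw [this]
        exact mul_mem hmem hsw

lemma closure_eq_K (n i : ℕ) (hn : 3 ≤ n) (hi : i + 3 ≤ n) :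
    Subgroup.closure ({s ⟨i, by omega⟩, s ⟨i + 1, by omega⟩} ∪
      {g : Equiv.Perm (Fin n) |
        ∃ m : Fin (n - 1), (m.val + 2 ≤ i ∨ i + 3 ≤ m.val) ∧ g = s m}) = K n i := by
  set S : Set (Equiv.Perm (Fin n)) := ({s ⟨i, by omega⟩, s ⟨i + 1, by omega⟩} ∪
      {g : Equiv.Perm (Fin n) |
        ∃ m : Fin (n - 1), (m.val + 2 ≤ i ∨ i + 3 ≤ m.val) ∧ g = s m}) with hSdef
  apply le_antisymm
  · rw [Subgroup.closure_le]
    intro g hg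
    simp only [hSdef, Set.mem_union, Set.mem_insert_iff, Set.mem_singleton_iff,
      Set.mem_setOf_eq] at hg
    rcases hg with (rfl | rfl) | ⟨m, hm, rfl⟩
    · intro x
      apply rg_swap
      unfold rg; simp only [Fin.val_mk]; split_ifs <;> omega
    · intro x
      apply rg_swap
      unfold rg; simp only [Fin.val_mk]; split_ifs <;> omega
    · intro x
      apply rg_swap
      unfold rg; simp only [Fin.val_mk]; split_ifs <;> omega
  · intro g hg
    have hg' : ∀ x, rg n i (g x) = rg n i x := hg
    have h0 : ∀ x, (rg n i (g x) = 0) ↔ (rg n i x = 0) := fun x => by rw [hg' x]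
    have h1 : ∀ x, (rg n i (g x) = 1) ↔ (rg n i x = 1) := fun x => by rw [hg' x]
    have h2 : ∀ x, (rg n i (g x) = 2) ↔ (rg n i x = 2) := fun x => by rw [hg' x]
    set g0 := Equiv.Perm.ofSubtype (g.subtypePerm (p := fun x => rg n i x = 0) h0) with hg0
    set g1 := Equiv.Perm.ofSubtype (g.subtypePerm (p := fun x => rg n i x = 1) h1) with hg1
    set g2 := Equiv.Perm.ofSubtype (g.subtypePerm (p := fun x => rg n i x = 2) h2) with hg2
    have hm0 : ∀ x, rg n i x = 0 → g0 x = g x := fun x hx =>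
      Equiv.Perm.ofSubtype_apply_of_mem (g.subtypePerm h0) hx
    have hn0 : ∀ x, rg n i x ≠ 0 → g0 x = x := fun x hx =>
      Equiv.Perm.ofSubtype_apply_of_not_mem (g.subtypePerm h0) hx
    have hm1 : ∀ x, rg n i x = 1 → g1 x = g x := fun x hx =>
      Equiv.Perm.ofSubtype_apply_of_mem (g.subtypePerm h1) hx
    have hn1 : ∀ x, rg n i x ≠ 1 → g1 x = x := fun x hx =>
      Equiv.Perm.ofSubtype_apply_of_not_mem (g.subtypePerm h1) hx
    have hm2 : ∀ x, rg n i x = 2 → g2 x = g x := fun x hx =>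
      Equiv.Perm.ofSubtype_apply_of_mem (g.subtypePerm h2) hx
    have hn2 : ∀ x, rg n i x ≠ 2 → g2 x = x := fun x hx =>
      Equiv.Perm.ofSubtype_apply_of_not_mem (g.subtypePerm h2) hx
    have hdec : g = g0 * g1 * g2 := by
      apply Equiv.ext
      intro x
      have happ : (g0 * g1 * g2) x = g0 (g1 (g2 x)) := rfl
      have hx012 : rg n i x = 0 ∨ rg n i x = 1 ∨ rg n i x = 2 := by
        unfold rg; split_ifs <;> simp
      rcases hx012 with hx | hx | hx
      · rw [happ, hn2 x (by omega), hn1 x (by omega), hm0 x hx]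
      · rw [happ, hn2 x (by omega), hm1 x hx, hn0 (g x) (by rw [hg' x]; omega)]
      · rw [happ, hm2 x hx, hn1 (g x) (by rw [hg' x]; omega),
          hn0 (g x) (by rw [hg' x]; omega)]
    have hmem0 : g0 ∈ Subgroup.closure S := by
      apply fix_mem_closure S 0 i (by omega)
      · intro j hj hjb hj2
        have hjn : j < n - 1 := by omega
        refine Set.mem_union_right _ ⟨⟨j, hjn⟩, Or.inl (by simp only [Fin.val_mk]; omega), rfl⟩
      · intro x hx
        apply hn0
        unfold rg; split_ifs <;> omega
    have hmem1 : g1 ∈ Subgroup.closure S := by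
      apply fix_mem_closure S i (i + 3) (by omega)
      · intro j hj hjb hj2
        have hji : j = i ∨ j = i + 1 := by omega
        rcases hji with rfl | rfl
        · exact Set.mem_union_left _ (Set.mem_insert _ _)
        · exact Set.mem_union_left _ (Set.mem_insert_of_mem _ rfl)
      · intro x hx
        apply hn1
        unfold rg; split_ifs <;> omega
    have hmem2 : g2 ∈ Subgroup.closure S := by
      apply fix_mem_closure S (i + 3) n le_rfl
      · intro j hj hjb hj2
        have hjn : j < n - 1 := by omega
        refine Set.mem_union_right _ ⟨⟨j, hjn⟩, Or.inr (by simp only [Fin.val_mk]; omega), rfl⟩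
      · intro x hx
        apply hn2
        unfold rg; split_ifs <;> omega
    rw [hdec]
    exact mul_mem (mul_mem hmem0 hmem1) hmem2

lemma card_interval (n a b : ℕ) (hb : b ≤ n) :
    Nat.card {x : Fin n // a ≤ x.val ∧ x.val < b} = b - a := by
  have e : {x : Fin n // a ≤ x.val ∧ x.val < b} ≃ Fin (b - a) :=
    { toFun := fun x => ⟨x.1.val - a, by have := x.2; omega⟩
      invFun := fun y => ⟨⟨y.val + a, by have := y.isLt; omega⟩, by
        simp only [Fin.val_mk]; have := y.isLt; omega⟩
      left_inv := fun x => by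
        apply Subtype.ext; apply Fin.ext; simp only [Fin.val_mk]; have := x.2; omega
      right_inv := fun y => by apply Fin.ext; simp only [Fin.val_mk]; omega }
  rw [Nat.card_congr e, Nat.card_eq_fintype_card, Fintype.card_fin]

lemma rg_eq_zero_iff {n i : ℕ} (x : Fin n) : rg n i x = 0 ↔ x.val < i := by
  unfold rg; split_ifs with h1 h2 <;> simp [h1]

lemma rg_eq_one_iff {n i : ℕ} (x : Fin n) :
    rg n i x = 1 ↔ i ≤ x.val ∧ x.val < i + 3 := by
  unfold rg; split_ifs with h1 h2 <;> simp_all <;> omega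

lemma rg_eq_two_iff {n i : ℕ} (x : Fin n) : rg n i x = 2 ↔ i + 3 ≤ x.val := by
  unfold rg; split_ifs with h1 h2 <;> simp_all <;> omega

lemma card_rg0 (n i : ℕ) (hi : i + 3 ≤ n) : Nat.card {x : Fin n // rg n i x = 0} = i := by
  have e : {x : Fin n // rg n i x = 0} ≃ {x : Fin n // 0 ≤ x.val ∧ x.val < i} :=
    Equiv.subtypeEquivRight fun x => (rg_eq_zero_iff x).trans (by simp)
  rw [Nat.card_congr e, card_interval n 0 i (by omega)]
  omega

lemma card_rg1 (n i : ℕ) (hi : i + 3 ≤ n) : Nat.card {x : Fin n // rg n i x = 1} = 3 := by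
  have e : {x : Fin n // rg n i x = 1} ≃ {x : Fin n // i ≤ x.val ∧ x.val < i + 3} :=
    Equiv.subtypeEquivRight fun x => rg_eq_one_iff x
  rw [Nat.card_congr e, card_interval n i (i + 3) hi]
  omega

lemma card_rg2 (n i : ℕ) (hi : i + 3 ≤ n) :
    Nat.card {x : Fin n // rg n i x = 2} = n - i - 3 := by
  have e : {x : Fin n // rg n i x = 2} ≃ {x : Fin n // i + 3 ≤ x.val ∧ x.val < n} :=
    Equiv.subtypeEquivRight fun x => (rg_eq_two_iff x).trans (and_iff_left x.isLt).symm
  rw [Nat.card_congr e, card_interval n (i + 3) n le_rfl]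
  omega

lemma decomp_eq (n i : ℕ) (g : Equiv.Perm (Fin n)) (hg : ∀ x, rg n i (g x) = rg n i x)
    (h0 : ∀ x : Fin n, rg n i (g x) = 0 ↔ rg n i x = 0)
    (h1 : ∀ x : Fin n, rg n i (g x) = 1 ↔ rg n i x = 1)
    (h2 : ∀ x : Fin n, rg n i (g x) = 2 ↔ rg n i x = 2) :
    Equiv.Perm.ofSubtype (g.subtypePerm (p := fun x => rg n i x = 0) h0) * Equiv.Perm.ofSubtype (g.subtypePerm (p := fun x => rg n i x = 1) h1) *
      Equiv.Perm.ofSubtype (g.subtypePerm (p := fun x => rg n i x = 2) h2) = g := by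
  apply Equiv.ext
  intro x
  have happ : ∀ (u v w : Equiv.Perm (Fin n)) (x : Fin n), (u * v * w) x = u (v (w x)) :=
    fun _ _ _ _ => rfl
  rw [happ]
  have hx012 : rg n i x = 0 ∨ rg n i x = 1 ∨ rg n i x = 2 := by
    unfold rg; split_ifs <;> simp
  rcases hx012 with hx | hx | hx
  · rw [Equiv.Perm.ofSubtype_apply_of_not_mem (g.subtypePerm (p := fun x => rg n i x = 2) h2) (by omega),
      Equiv.Perm.ofSubtype_apply_of_not_mem (g.subtypePerm (p := fun x => rg n i x = 1) h1) (by omega),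
      Equiv.Perm.ofSubtype_apply_of_mem (g.subtypePerm (p := fun x => rg n i x = 0) h0) hx]
    rfl
  · rw [Equiv.Perm.ofSubtype_apply_of_not_mem (g.subtypePerm (p := fun x => rg n i x = 2) h2) (by omega),
      Equiv.Perm.ofSubtype_apply_of_mem (g.subtypePerm (p := fun x => rg n i x = 1) h1) hx,
      show ((g.subtypePerm (p := fun x => rg n i x = 1) h1) ⟨x, hx⟩ : Fin n) = g x from rfl,
      Equiv.Perm.ofSubtype_apply_of_not_mem (g.subtypePerm (p := fun x => rg n i x = 0) h0) (by rw [hg x]; omega)]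
  · rw [Equiv.Perm.ofSubtype_apply_of_mem (g.subtypePerm (p := fun x => rg n i x = 2) h2) hx,
      show ((g.subtypePerm (p := fun x => rg n i x = 2) h2) ⟨x, hx⟩ : Fin n) = g x from rfl,
      Equiv.Perm.ofSubtype_apply_of_not_mem (g.subtypePerm (p := fun x => rg n i x = 1) h1) (by rw [hg x]; omega),
      Equiv.Perm.ofSubtype_apply_of_not_mem (g.subtypePerm (p := fun x => rg n i x = 0) h0) (by rw [hg x]; omega)]

section

variable {n i : ℕ} (a : Equiv.Perm {x : Fin n // rg n i x = 0})
  (b : Equiv.Perm {x : Fin n // rg n i x = 1}) (c : Equiv.Perm {x : Fin n // rg n i x = 2})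

lemma abc_apply0 (x : Fin n) (hx : rg n i x = 0) :
    (Equiv.Perm.ofSubtype a * Equiv.Perm.ofSubtype b * Equiv.Perm.ofSubtype c) x
      = (a ⟨x, hx⟩ : Fin n) := by
  have happ : ∀ (u v w : Equiv.Perm (Fin n)) (x : Fin n), (u * v * w) x = u (v (w x)) :=
    fun _ _ _ _ => rfl
  rw [happ, Equiv.Perm.ofSubtype_apply_of_not_mem c (by omega),
    Equiv.Perm.ofSubtype_apply_of_not_mem b (by omega),
    Equiv.Perm.ofSubtype_apply_of_mem a hx]

lemma abc_apply1 (x : Fin n) (hx : rg n i x = 1) :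
    (Equiv.Perm.ofSubtype a * Equiv.Perm.ofSubtype b * Equiv.Perm.ofSubtype c) x
      = (b ⟨x, hx⟩ : Fin n) := by
  have happ : ∀ (u v w : Equiv.Perm (Fin n)) (x : Fin n), (u * v * w) x = u (v (w x)) :=
    fun _ _ _ _ => rfl
  have hb1 : rg n i ((b ⟨x, hx⟩ : Fin n)) = 1 := (b ⟨x, hx⟩).2
  rw [happ, Equiv.Perm.ofSubtype_apply_of_not_mem c (by omega),
    Equiv.Perm.ofSubtype_apply_of_mem b hx,
    Equiv.Perm.ofSubtype_apply_of_not_mem a (by omega)]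

lemma abc_apply2 (x : Fin n) (hx : rg n i x = 2) :
    (Equiv.Perm.ofSubtype a * Equiv.Perm.ofSubtype b * Equiv.Perm.ofSubtype c) x
      = (c ⟨x, hx⟩ : Fin n) := by
  have happ : ∀ (u v w : Equiv.Perm (Fin n)) (x : Fin n), (u * v * w) x = u (v (w x)) :=
    fun _ _ _ _ => rfl
  have hc2 : rg n i ((c ⟨x, hx⟩ : Fin n)) = 2 := (c ⟨x, hx⟩).2
  rw [happ, Equiv.Perm.ofSubtype_apply_of_mem c hx,
    Equiv.Perm.ofSubtype_apply_of_not_mem b (by omega),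
    Equiv.Perm.ofSubtype_apply_of_not_mem a (by omega)]

lemma abc_pres : ∀ x : Fin n,
    rg n i ((Equiv.Perm.ofSubtype a * Equiv.Perm.ofSubtype b * Equiv.Perm.ofSubtype c) x)
      = rg n i x := by
  intro x
  have hx012 : rg n i x = 0 ∨ rg n i x = 1 ∨ rg n i x = 2 := by
    unfold rg; split_ifs <;> simp
  rcases hx012 with hx | hx | hx
  · rw [abc_apply0 a b c x hx, (a ⟨x, hx⟩).2, hx]
  · rw [abc_apply1 a b c x hx, (b ⟨x, hx⟩).2, hx]
  · rw [abc_apply2 a b c x hx, (c ⟨x, hx⟩).2, hx]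

end

def kEquiv (n i : ℕ) : (K n i) ≃
    Equiv.Perm {x : Fin n // rg n i x = 0} × Equiv.Perm {x : Fin n // rg n i x = 1} ×
      Equiv.Perm {x : Fin n // rg n i x = 2} where
  toFun g :=
    (g.1.subtypePerm fun x => by rw [(g.2 : ∀ x, rg n i (g.1 x) = rg n i x) x],
      g.1.subtypePerm fun x => by rw [(g.2 : ∀ x, rg n i (g.1 x) = rg n i x) x],
      g.1.subtypePerm fun x => by rw [(g.2 : ∀ x, rg n i (g.1 x) = rg n i x) x])
  invFun t := ⟨Equiv.Perm.ofSubtype t.1 * Equiv.Perm.ofSubtype t.2.1 *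
      Equiv.Perm.ofSubtype t.2.2, abc_pres t.1 t.2.1 t.2.2⟩
  left_inv g := by
    have hg : ∀ x, rg n i (g.1 x) = rg n i x := g.2
    exact Subtype.ext (decomp_eq n i g.1 hg (fun x => by rw [hg x])
      (fun x => by rw [hg x]) (fun x => by rw [hg x]))
  right_inv t := by
    refine Prod.ext ?_ (Prod.ext ?_ ?_)
    · apply Equiv.ext; rintro ⟨x, hx⟩
      apply Subtype.ext
      exact abc_apply0 t.1 t.2.1 t.2.2 x hx
    · apply Equiv.ext; rintro ⟨x, hx⟩
      apply Subtype.ext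
      exact abc_apply1 t.1 t.2.1 t.2.2 x hx
    · apply Equiv.ext; rintro ⟨x, hx⟩
      apply Subtype.ext
      exact abc_apply2 t.1 t.2.1 t.2.2 x hx

lemma card_K (n i : ℕ) (hi : i + 3 ≤ n) :
    Nat.card (K n i) = Nat.factorial i * (6 * Nat.factorial (n - i - 3)) := by
  rw [Nat.card_congr (kEquiv n i), Nat.card_prod, Nat.card_prod]
  have c0 : Nat.card (Equiv.Perm {x : Fin n // rg n i x = 0}) = Nat.factorial i := by
    rw [Nat.card_eq_fintype_card, Fintype.card_perm, ← Nat.card_eq_fintype_card,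
      card_rg0 n i hi]
  have c1 : Nat.card (Equiv.Perm {x : Fin n // rg n i x = 1}) = 6 := by
    rw [Nat.card_eq_fintype_card, Fintype.card_perm, ← Nat.card_eq_fintype_card,
      card_rg1 n i hi]
    decide
  have c2 : Nat.card (Equiv.Perm {x : Fin n // rg n i x = 2}) =
      Nat.factorial (n - i - 3) := by
    rw [Nat.card_eq_fintype_card, Fintype.card_perm, ← Nat.card_eq_fintype_card,
      card_rg2 n i hi]
  rw [c0, c1, c2]

lemma card_stab (n : ℕ) (hn : 1 ≤ n) (t : Fin n) :
    Nat.card {σ : Equiv.Perm (Fin n) // σ t = t} = (n - 1).factorial := by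
  have e1 : {σ : Equiv.Perm (Fin n) // σ t = t} ≃
      {f : Equiv.Perm (Fin n) // ∀ a, ¬(a ≠ t) → f a = a} :=
    Equiv.subtypeEquivRight fun σ => by
      constructor
      · intro h a ha
        push_neg at ha
        rw [ha, h]
      · intro h
        exact h t (by simp)
  have e2 : {f : Equiv.Perm (Fin n) // ∀ a, ¬(a ≠ t) → f a = a} ≃
      Equiv.Perm {x : Fin n // x ≠ t} :=
    (Equiv.Perm.subtypeEquivSubtypePerm (fun x : Fin n => x ≠ t)).symm
  rw [Nat.card_congr e1, Nat.card_congr e2, Nat.card_eq_fintype_card, Fintype.card_perm]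
  have : Fintype.card {x : Fin n // x ≠ t} = n - 1 := by
    simp [Fintype.card_subtype_compl]
  rw [this]

/-- Corollary 5.5: let `J_i` be the subgroup generated by `s_i, s_{i+1}`
together with all adjacent transpositions disjoint from them.  The verticality predicate
`σ⁻¹(n-1) ∈ {i, i+1, i+2}` is invariant under right multiplication by elements of `J_i`,
and the number of left cosets of `J_i` whose representatives satisfy it equals
`(n-1)!/(2·i!·(n-i-3)!) = C(n-1, i+2)·C(i+2, 2)`. -/
theorem card_vertical_classes (n : ℕ) (hn : 3 ≤ n) (i : ℕ) (hi : i + 3 ≤ n) :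
    let J : Subgroup (Equiv.Perm (Fin n)) := Subgroup.closure
      ({s ⟨i, by omega⟩, s ⟨i + 1, by omega⟩} ∪
        {g : Equiv.Perm (Fin n) |
          ∃ m : Fin (n - 1), (m.val + 2 ≤ i ∨ i + 3 ≤ m.val) ∧ g = s m})
    let P : Equiv.Perm (Fin n) → Prop := fun σ =>
      (σ⁻¹ ⟨n - 1, by omega⟩ : Fin n).val ∈ ({i, i + 1, i + 2} : Set ℕ)
    (∀ σ τ : Equiv.Perm (Fin n), τ ∈ J → (P (σ * τ) ↔ P σ)) ∧
    Nat.card {x : Equiv.Perm (Fin n) ⧸ J // ∃ σ, QuotientGroup.mk σ = x ∧ P σ} =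
      (n - 1).factorial / (2 * Nat.factorial i * Nat.factorial (n - i - 3)) ∧
    Nat.card {x : Equiv.Perm (Fin n) ⧸ J // ∃ σ, QuotientGroup.mk σ = x ∧ P σ} =
      Nat.choose (n - 1) (i + 2) * Nat.choose (i + 2) 2 := by
  intro J P
  have hJK : J = K n i := closure_eq_K n i hn hi
  set t : Fin n := ⟨n - 1, by omega⟩ with ht
  have hP1 : ∀ σ : Equiv.Perm (Fin n), P σ ↔ rg n i (σ⁻¹ t) = 1 := by
    intro σ
    show (σ⁻¹ t : Fin n).val ∈ ({i, i + 1, i + 2} : Set ℕ) ↔ _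
    rw [rg_eq_one_iff]
    simp only [Set.mem_insert_iff, Set.mem_singleton_iff]
    omega
  have part1 : ∀ σ τ : Equiv.Perm (Fin n), τ ∈ J → (P (σ * τ) ↔ P σ) := by
    intro σ τ hτ
    have hτK' : ∀ x, rg n i (τ⁻¹ x) = rg n i x := by
      rw [hJK] at hτ
      exact (K n i).inv_mem hτ
    rw [hP1, hP1]
    have hmt : (σ * τ)⁻¹ t = τ⁻¹ (σ⁻¹ t) := by rw [mul_inv_rev]; rfl
    rw [hmt, hτK']
  refine ⟨part1, ?_⟩
  -- the two counting equivs
  have e1 : {σ : Equiv.Perm (Fin n) // P σ} ≃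
      {x : Equiv.Perm (Fin n) ⧸ J // ∃ σ, QuotientGroup.mk σ = x ∧ P σ} × J :=
    { toFun := fun σ => (⟨QuotientGroup.mk σ.1, σ.1, rfl, σ.2⟩,
        ⟨(QuotientGroup.mk σ.1 : Equiv.Perm (Fin n) ⧸ J).out⁻¹ * σ.1,
          QuotientGroup.eq.mp (QuotientGroup.out_eq' _)⟩)
      invFun := fun qj => ⟨qj.1.1.out * qj.2.1, by
        obtain ⟨σ0, hσ0, hPσ0⟩ := qj.1.2
        have h1 : σ0⁻¹ * (qj.1.1.out * qj.2.1) ∈ J := by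
          have h2 : σ0⁻¹ * qj.1.1.out ∈ J := by
            apply QuotientGroup.eq.mp
            rw [hσ0, QuotientGroup.out_eq']
          have := mul_mem h2 qj.2.2
          rwa [mul_assoc] at this
        have := (part1 σ0 _ h1).mpr hPσ0
        rwa [mul_inv_cancel_left] at this⟩
      left_inv := fun σ => Subtype.ext (mul_inv_cancel_left _ _)
      right_inv := fun qj => by
        have hmk : QuotientGroup.mk (qj.1.1.out * qj.2.1) = qj.1.1 := by
          rw [QuotientGroup.mk_mul_of_mem _ qj.2.2, QuotientGroup.out_eq']
        refine Prod.ext (Subtype.ext ?_) (Subtype.ext ?_)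
        · exact hmk
        · show (QuotientGroup.mk (qj.1.1.out * qj.2.1) :
              Equiv.Perm (Fin n) ⧸ J).out⁻¹ * (qj.1.1.out * qj.2.1) = qj.2.1
          rw [hmk, inv_mul_cancel_left] }
  have e2 : {σ : Equiv.Perm (Fin n) // P σ} ≃
      {v : Fin n // rg n i v = 1} × {σ : Equiv.Perm (Fin n) // σ⁻¹ t = t} :=
    { toFun := fun σ => (⟨σ.1⁻¹ t, (hP1 σ.1).mp σ.2⟩,
        ⟨σ.1 * Equiv.swap (σ.1⁻¹ t) t, by
          rw [mul_inv_rev, Equiv.swap_inv]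
          show Equiv.swap (σ.1⁻¹ t) t (σ.1⁻¹ t) = t
          rw [Equiv.swap_apply_left]⟩)
      invFun := fun vτ => ⟨vτ.2.1 * Equiv.swap vτ.1.1 t, by
        apply (hP1 _).mpr
        rw [mul_inv_rev, Equiv.swap_inv]
        show rg n i (Equiv.swap vτ.1.1 t (vτ.2.1⁻¹ t)) = 1
        rw [vτ.2.2, Equiv.swap_apply_right]
        exact vτ.1.2⟩
      left_inv := fun σ => by
        apply Subtype.ext
        show σ.1 * Equiv.swap (σ.1⁻¹ t) t * Equiv.swap (σ.1⁻¹ t) t = σ.1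
        rw [mul_assoc, Equiv.swap_mul_self, mul_one]
      right_inv := fun vτ => by
        have hv : (vτ.2.1 * Equiv.swap vτ.1.1 t)⁻¹ t = vτ.1.1 := by
          rw [mul_inv_rev, Equiv.swap_inv]
          show Equiv.swap vτ.1.1 t (vτ.2.1⁻¹ t) = vτ.1.1
          rw [vτ.2.2, Equiv.swap_apply_right]
        refine Prod.ext (Subtype.ext hv) (Subtype.ext ?_)
        show vτ.2.1 * Equiv.swap vτ.1.1 t *
            Equiv.swap ((vτ.2.1 * Equiv.swap vτ.1.1 t)⁻¹ t) t = vτ.2.1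
        rw [hv, mul_assoc, Equiv.swap_mul_self, mul_one] }
  have hcardP : Nat.card {σ : Equiv.Perm (Fin n) // P σ} = 3 * (n - 1).factorial := by
    rw [Nat.card_congr e2, Nat.card_prod, card_rg1 n i hi]
    have e3 : {σ : Equiv.Perm (Fin n) // σ⁻¹ t = t} ≃
        {σ : Equiv.Perm (Fin n) // σ t = t} :=
      Equiv.subtypeEquivRight fun σ => (Equiv.Perm.inv_eq_iff_eq).trans eq_comm
    rw [Nat.card_congr e3, card_stab n (by omega) t]
  have hcardJ : Nat.card J = Nat.factorial i * (6 * Nat.factorial (n - i - 3)) := by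
    rw [hJK]
    exact card_K n i hi
  have key : Nat.card {x : Equiv.Perm (Fin n) ⧸ J // ∃ σ, QuotientGroup.mk σ = x ∧ P σ} *
      (Nat.factorial i * (6 * Nat.factorial (n - i - 3))) = 3 * (n - 1).factorial := by
    rw [← hcardJ, ← Nat.card_prod, ← Nat.card_congr e1, hcardP]
  set Q := Nat.card {x : Equiv.Perm (Fin n) ⧸ J // ∃ σ, QuotientGroup.mk σ = x ∧ P σ}
    with hQ
  have key2 : Q * (2 * Nat.factorial i * Nat.factorial (n - i - 3)) = (n - 1).factorial := by
    apply Nat.eq_of_mul_eq_mul_left (show 0 < 3 by norm_num)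
    rw [← key]
    ring
  have Dpos : 0 < 2 * Nat.factorial i * Nat.factorial (n - i - 3) := by
    positivity
  constructor
  · exact (Nat.div_eq_of_eq_mul_left Dpos key2.symm).symm
  · have c1' : Nat.choose (i + 2) 2 * 2 * Nat.factorial i = Nat.factorial (i + 2) := by
      have := Nat.choose_mul_factorial_mul_factorial (show 2 ≤ i + 2 by omega)
      simpa using this
    have hc : (Nat.choose (n - 1) (i + 2) * Nat.choose (i + 2) 2) *
        (2 * Nat.factorial i * Nat.factorial (n - i - 3)) = (n - 1).factorial := by
      calc (Nat.choose (n - 1) (i + 2) * Nat.choose (i + 2) 2) *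
            (2 * Nat.factorial i * Nat.factorial (n - i - 3))
          = Nat.choose (n - 1) (i + 2) * ((Nat.choose (i + 2) 2 * 2 * Nat.factorial i) *
            Nat.factorial (n - i - 3)) := by ring
        _ = Nat.choose (n - 1) (i + 2) * (Nat.factorial (i + 2) *
            Nat.factorial (n - i - 3)) := by rw [c1']
        _ = Nat.choose (n - 1) (i + 2) * Nat.factorial (i + 2) *
            Nat.factorial (n - 1 - (i + 2)) := by
            rw [show n - i - 3 = n - 1 - (i + 2) from by omega]; ring
        _ = (n - 1).factorial := Nat.choose_mul_factorial_mul_factorial (by omega)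
    exact Nat.eq_of_mul_eq_mul_right Dpos (key2.trans hc.symm)
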